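/- Assume E, E_err, and E_cor are all nonempty and that π < 1 and q > 0, where π = |E_err|/|E|, q = |{ω ∈ E_err : Q̂(ω) = Y(ω)}| / |E_err|, and r = |{ω ∈ E_cor : Q̂(ω) ≠ Y(ω)}| / |E_cor|. Then the refinement strictly improves accuracy, i.e., Acc_repl > Acc_base, if and only if r < (π/(1 − π))·q; that is, refinement is beneficial as long as the error-introduction rate stays below π/(1 − π) times the correction rate. -/

import Mathlib

open Finset

/-- Baseline accuracy of the teacher `Q`. -/
noncomputable def accBase {V K : Type*} [Fintype V] [DecidableEq K] (Q Y : V → K) : ℝ :=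
  ((univ.filter fun ω => Q ω = Y ω).card : ℝ) / (Fintype.card V : ℝ)

/-- Refined accuracy: teacher on `C = Ω \ E`, refiner on `E`. -/
noncomputable def accRepl {V K : Type*} [Fintype V] [DecidableEq V] [DecidableEq K]
    (Q Qhat Y : V → K) (E : Finset V) : ℝ :=
  ((((Eᶜ).filter fun ω => Q ω = Y ω).card : ℝ)
      + (((E.filter fun ω => Qhat ω = Y ω).card : ℝ))) / (Fintype.card V : ℝ)

/-- `E_err = {ω ∈ E : Q(ω) ≠ Y(ω)}`, the unreliable voxels misclassified by the teacher. -/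
def errSet {V K : Type*} [DecidableEq K] (Q Y : V → K) (E : Finset V) : Finset V :=
  E.filter fun ω => Q ω ≠ Y ω

/-- `E_cor = {ω ∈ E : Q(ω) = Y(ω)}`, the unreliable voxels correctly classified by the teacher. -/
def corSet {V K : Type*} [DecidableEq K] (Q Y : V → K) (E : Finset V) : Finset V :=
  E.filter fun ω => Q ω = Y ω

/-- Mask precision: `π = |E_err| / |E|`. -/
noncomputable def piVal {V K : Type*} [DecidableEq K] (Q Y : V → K) (E : Finset V) : ℝ :=
  ((errSet Q Y E).card : ℝ) / (E.card : ℝ)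

/-- Correction rate: `q = |{ω ∈ E_err : Q̂(ω) = Y(ω)}| / |E_err|`. -/
noncomputable def qVal {V K : Type*} [DecidableEq K] (Q Qhat Y : V → K) (E : Finset V) : ℝ :=
  (((errSet Q Y E).filter fun ω => Qhat ω = Y ω).card : ℝ) / ((errSet Q Y E).card : ℝ)

/-- Error-introduction rate: `r = |{ω ∈ E_cor : Q̂(ω) ≠ Y(ω)}| / |E_cor|`. -/
noncomputable def rVal {V K : Type*} [DecidableEq K] (Q Qhat Y : V → K) (E : Finset V) : ℝ :=
  (((corSet Q Y E).filter fun ω => Qhat ω ≠ Y ω).card : ℝ) / ((corSet Q Y E).card : ℝ)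

/-- If `E`, `E_err`, `E_cor` are nonempty, `π < 1`, and `q > 0`, then refinement strictly
improves accuracy, i.e. `Acc_repl > Acc_base`, if and only if the error-introduction rate
stays below `π/(1 − π)` times the correction rate: `r < (π/(1 − π))·q`. -/
theorem accRepl_gt_accBase_iff_rate_bound {V K : Type*} [Fintype V] [Nonempty V]
    [DecidableEq V] [DecidableEq K]
    (Q Qhat Y : V → K) (E : Finset V)
    (hE : E.Nonempty) (hErr : (errSet Q Y E).Nonempty) (hCor : (corSet Q Y E).Nonempty)
    (hpi : piVal Q Y E < 1) (hq : qVal Q Qhat Y E > 0) :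
    accRepl Q Qhat Y E > accBase Q Y ↔
      rVal Q Qhat Y E < (piVal Q Y E / (1 - piVal Q Y E)) * qVal Q Qhat Y E := by

  classical
  set a := (errSet Q Y E).card with ha
  set c := (corSet Q Y E).card with hc
  set g := ((errSet Q Y E).filter fun ω => Qhat ω = Y ω).card with hg
  set b := ((corSet Q Y E).filter fun ω => Qhat ω ≠ Y ω).card with hb
  set d := ((corSet Q Y E).filter fun ω => Qhat ω = Y ω).card with hd
  have hdisj : Disjoint (corSet Q Y E) (errSet Q Y E) := by
    simpa [corSet, errSet] using
      Finset.disjoint_filter_filter_not E E (fun ω => Q ω = Y ω)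
  have hunion : corSet Q Y E ∪ errSet Q Y E = E := by
    simpa [corSet, errSet] using
      Finset.filter_union_filter_not_eq (fun ω => Q ω = Y ω) E
  have hac : c + a = E.card := by
    rw [ha, hc, ← Finset.card_union_of_disjoint hdisj, hunion]
  have hdb : d + b = c := by
    rw [hd, hb, hc]
    exact Finset.card_filter_add_card_filter_not _
  have hEfilt : (E.filter fun ω => Qhat ω = Y ω).card = d + g := by
    rw [← hunion, Finset.filter_union, Finset.card_union_of_disjoint
      (Finset.disjoint_filter_filter hdisj)]
  have hbase : (Finset.univ.filter fun ω => Q ω = Y ω).card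
      = ((Eᶜ).filter fun ω => Q ω = Y ω).card + c := by
    have huniv : (Eᶜ : Finset V) ∪ E = Finset.univ := by
      ext ω; simp [Finset.mem_compl]; tauto
    rw [← huniv, Finset.filter_union, Finset.card_union_of_disjoint
      (Finset.disjoint_filter_filter disjoint_compl_left)]
    rfl
  have hNpos : (0:ℝ) < (Fintype.card V : ℝ) := by
    exact_mod_cast Fintype.card_pos
  have hapos : (0:ℝ) < (a:ℝ) := by exact_mod_cast Finset.card_pos.mpr hErr
  have hcpos : (0:ℝ) < (c:ℝ) := by exact_mod_cast Finset.card_pos.mpr hCor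
  have hepos : (0:ℝ) < (E.card:ℝ) := by exact_mod_cast Finset.card_pos.mpr hE
  have h1 : accRepl Q Qhat Y E > accBase Q Y ↔ (b:ℝ) < (g:ℝ) := by
    unfold accRepl accBase
    rw [hbase, hEfilt, gt_iff_lt, div_lt_div_iff₀ hNpos hNpos]
    have hdb' : (d:ℝ) + b = c := by exact_mod_cast hdb
    push_cast
    rw [mul_lt_mul_iff_of_pos_right hNpos]
    constructor <;> intro h <;> linarith
  have hsum : (c:ℝ) + a = (E.card:ℝ) := by exact_mod_cast hac
  have h2 : rVal Q Qhat Y E < (piVal Q Y E / (1 - piVal Q Y E)) * qVal Q Qhat Y E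
      ↔ (b:ℝ) < (g:ℝ) := by
    unfold rVal piVal qVal
    rw [← ha, ← hc, ← hg, ← hb]
    have h1pi : (1:ℝ) - a / E.card = c / E.card := by
      field_simp
      linarith [hsum]
    rw [h1pi]
    have key : (a:ℝ) / E.card / ((c:ℝ) / E.card) * ((g:ℝ)/a) = (g:ℝ)/c := by
      field_simp
    rw [key, div_lt_div_iff₀ hcpos hcpos]
    exact mul_lt_mul_iff_of_pos_right hcpos
  rw [h1, h2]
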